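/- (Modular law for geometric products) Let A, B, C be extensors in Λ(V) with A dividing C (i.e. Ā ⊆ C̄). Then for all nonnegative integers s, t: ⋄₃₂^{(t)} ⋄₂₁^{(s)} (A ⊗ B ⊗ C) = ⋄₂₁^{(s)} ⋄₃₂^{(t)} (A ⊗ B ⊗ C). -/

import Mathlib

open TensorProduct

/-- The ordered wedge product of the vectors `u t`, `t ∈ S` (in increasing order of index). -/
noncomputable def wedgeOn (K : Type*) {V : Type*} [CommRing K] [AddCommGroup V] [Module K V]
    {a : ℕ} (u : Fin a → V) (S : Finset (Fin a)) : ExteriorAlgebra K V :=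
  ((S.sort (· ≤ ·)).map fun t => ExteriorAlgebra.ι K (u t)).prod

/-- The shuffle sign of the coproduct slice `(Sᶜ, S)` of a word of length `a`. -/
def shuffleSign {a : ℕ} (S : Finset (Fin a)) : ℤ :=
  (-1) ^ (∑ i ∈ S, (Sᶜ.filter fun j => i < j).card)

/-- The raising geometric product `⋄₂₁^(h)(A ⊗ B) = Σ_{(A)₍ₐ₋ₕ,ₕ₎} A₍₁₎ ⊗ A₍₂₎B` for an
extensor `A = u 0 ∧ ⋯ ∧ u (a-1)` and `B ∈ Λ(V)`. -/
noncomputable def geom21 (K : Type*) {V : Type*} [CommRing K] [AddCommGroup V] [Module K V]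
    (h : ℕ) {a : ℕ} (u : Fin a → V) (B : ExteriorAlgebra K V) :
    ExteriorAlgebra K V ⊗[K] ExteriorAlgebra K V :=
  ∑ S ∈ Finset.powersetCard h Finset.univ,
    shuffleSign S • (wedgeOn K u Sᶜ ⊗ₜ[K] (wedgeOn K u S * B))


lemma sortMapOE {a b : ℕ} (f : Fin a ↪o Fin b) (T : Finset (Fin a)) :
    (T.map f.toEmbedding).sort (· ≤ ·) = (T.sort (· ≤ ·)).map f := by
  refine (fun h1 h2 h3 => List.Perm.eq_of_pairwise' (r := (· ≤ ·)) h2 h3 h1) ?_ ?_ ?_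
  · rw [← Multiset.coe_eq_coe, Finset.sort_eq, Finset.map_val,
      ← Finset.sort_eq T (· ≤ ·), Multiset.map_coe]
    rfl
  · exact Finset.pairwise_sort _ _
  · exact List.Pairwise.map f (fun _ _ h => f.le_iff_le.mpr h) (Finset.pairwise_sort _ _)

lemma sortOfFn {a k : ℕ} (S : Finset (Fin a)) (hS : S.card = k) :
    S.sort (· ≤ ·) = List.ofFn (fun i : Fin k => S.orderEmbOfFin hS i) := by
  apply List.ext_getElem
  · simp [hS]
  · intro i h1 h2
    simp [Finset.orderEmbOfFin_apply]

lemma sortUnion {α : Type*} [LinearOrder α] [DecidableEq α] (A B : Finset α)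
    (h : ∀ x ∈ A, ∀ y ∈ B, x < y) :
    (A ∪ B).sort (· ≤ ·) = A.sort (· ≤ ·) ++ B.sort (· ≤ ·) := by
  have hd : Disjoint A B := by
    rw [Finset.disjoint_left]
    intro x hA hB
    exact lt_irrefl x (h x hA x hB)
  refine (fun h1 h2 h3 => List.Perm.eq_of_pairwise' (r := (· ≤ ·)) h2 h3 h1) ?_ ?_ ?_
  · rw [← Multiset.coe_eq_coe]
    push_cast [Finset.sort_eq]
    rw [← Finset.disjUnion_eq_union _ _ hd]
    simp only [Finset.disjUnion]
    rw [← Finset.sort_eq A (· ≤ ·), ← Finset.sort_eq B (· ≤ ·)]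
    rfl
  · exact Finset.pairwise_sort _ _
  · rw [List.pairwise_append]
    refine ⟨Finset.pairwise_sort _ _, Finset.pairwise_sort _ _, ?_⟩
    intro x hx y hy
    exact (h x (by simpa using hx) y (by simpa using hy)).le

lemma complMap {s b : ℕ} (T : Finset (Fin b)) :
    (T.map (Fin.natAddOrderEmb s).toEmbedding)ᶜ =
      (Finset.univ.map (Fin.castAddOrderEmb b).toEmbedding) ∪
        (Tᶜ.map (Fin.natAddOrderEmb s).toEmbedding) := by
  ext i
  refine Fin.addCases (fun j => ?_) (fun j => ?_) i
  · simp only [Fin.natAddOrderEmb, Finset.mem_compl, Finset.mem_map,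
      RelEmbedding.coe_toEmbedding, OrderEmbedding.coe_ofStrictMono, Fin.ext_iff,
      Fin.coe_natAdd, Fin.coe_castAdd, not_exists, not_and, Fin.castAddOrderEmb,
      Finset.mem_union, Finset.mem_univ, true_and, exists_apply_eq_apply, true_or, iff_true]
    intro x _
    have := j.isLt
    omega
  · simp only [Fin.natAddOrderEmb, Finset.mem_compl, Finset.mem_map,
      RelEmbedding.coe_toEmbedding, OrderEmbedding.coe_ofStrictMono, Fin.ext_iff,
      Fin.coe_natAdd, add_right_inj, not_exists, not_and, Fin.castAddOrderEmb,
      Finset.mem_union, Finset.mem_univ, Fin.coe_castAdd, true_and]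
    constructor
    · exact fun h => Or.inr ⟨j, fun hj => h j hj rfl, rfl⟩
    · rintro (⟨a, ha⟩ | ⟨a, haT, ha⟩)
      · have := a.isLt
        omega
      · intro x hx hxj
        have h1 : x = j := Fin.ext hxj
        have h2 : a = j := Fin.ext ha
        exact haT (h2 ▸ h1 ▸ hx)

/-- The shuffle sign is preserved by `natAdd`. -/
lemma shuffleSign_map {s b : ℕ} (T : Finset (Fin b)) :
    shuffleSign (T.map (Fin.natAddOrderEmb s).toEmbedding) = shuffleSign T := by
  unfold shuffleSign
  congr 1
  rw [Finset.sum_map]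
  refine Finset.sum_congr rfl fun i₀ _ => ?_
  rw [complMap, Finset.filter_union, Finset.card_union_of_disjoint, Finset.filter_map,
    Finset.filter_map]
  · have h1 : (Finset.univ.filter
        ((fun j => (Fin.natAddOrderEmb s).toEmbedding i₀ < j) ∘ ⇑(Fin.castAddOrderEmb b).toEmbedding)) = ∅ := by
      refine Finset.filter_false_of_mem fun j _ => ?_
      simp only [Function.comp, not_lt, Fin.le_def, Fin.natAddOrderEmb_apply,
        Fin.castAddOrderEmb_apply, RelEmbedding.coe_toEmbedding,
        Fin.coe_natAdd, Fin.coe_castAdd]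
      have := j.isLt
      omega
    have h2 : (Tᶜ.filter
        ((fun j => (Fin.natAddOrderEmb s).toEmbedding i₀ < j) ∘ ⇑(Fin.natAddOrderEmb s).toEmbedding)) =
        Tᶜ.filter fun j => i₀ < j := by
      refine Finset.filter_congr fun j _ => ?_
      simp only [Function.comp, RelEmbedding.coe_toEmbedding]
      exact (Fin.natAddOrderEmb s).lt_iff_lt
    rw [h1, h2]
    simp
  · exact Finset.disjoint_filter_filter (Finset.disjoint_left.mpr (by
      intro x hx hx2
      simp only [Finset.mem_map, RelEmbedding.coe_toEmbedding] at hx hx2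
      obtain ⟨j, -, rfl⟩ := hx
      obtain ⟨j', -, hj'⟩ := hx2
      simp only [Fin.ext_iff, Fin.natAddOrderEmb, Fin.castAddOrderEmb,
        OrderEmbedding.coe_ofStrictMono, Fin.coe_natAdd, Fin.coe_castAdd] at hj'
      have := j.isLt
      omega))

section WedgeLemmas
variable {K V : Type*} [CommRing K] [AddCommGroup V] [Module K V]

lemma wedgeOn_map {a b : ℕ} (f : Fin a ↪o Fin b) (v : Fin b → V) (T : Finset (Fin a)) :
    wedgeOn K v (T.map f.toEmbedding) = wedgeOn K (v ∘ f) T := by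
  unfold wedgeOn
  rw [sortMapOE, List.map_map]
  rfl

lemma wedgeOn_univ {n : ℕ} (p : Fin n → V) :
    wedgeOn K p Finset.univ = ExteriorAlgebra.ιMulti K n p := by
  unfold wedgeOn
  rw [Fin.sort_univ, ExteriorAlgebra.ιMulti_apply, List.ofFn_eq_map]

lemma wedgeOn_eq_ιMulti {a k : ℕ} (u : Fin a → V) (S : Finset (Fin a)) (hS : S.card = k) :
    wedgeOn K u S = ExteriorAlgebra.ιMulti K k (u ∘ S.orderEmbOfFin hS) := by
  unfold wedgeOn
  rw [sortOfFn S hS, ExteriorAlgebra.ιMulti_apply, List.map_ofFn]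
  rfl

lemma wedgeOn_mul_ιMulti {a k b : ℕ} (u : Fin a → V) (S : Finset (Fin a)) (hS : S.card = k)
    (w : Fin b → V) :
    wedgeOn K u S * ExteriorAlgebra.ιMulti K b w =
      ExteriorAlgebra.ιMulti K (k + b) (Fin.append (u ∘ S.orderEmbOfFin hS) w) := by
  rw [wedgeOn_eq_ιMulti u S hS, ExteriorAlgebra.ιMulti_apply, ExteriorAlgebra.ιMulti_apply,
    ExteriorAlgebra.ιMulti_apply, ← List.prod_append, ← List.ofFn_fin_append]
  refine congrArg List.prod (congrArg List.ofFn (funext fun i => ?_)).symm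
  refine Fin.addCases (fun j => ?_) (fun j => ?_) i <;>
    simp [Fin.append_left, Fin.append_right]

lemma wedgeOn_natAdd {s b : ℕ} (p : Fin s → V) (w : Fin b → V) (T : Finset (Fin b)) :
    wedgeOn K (Fin.append p w) (T.map (Fin.natAddOrderEmb s).toEmbedding) = wedgeOn K w T := by
  rw [wedgeOn_map]
  have h : Fin.append p w ∘ (Fin.natAddOrderEmb s) = w := by
    funext j
    simp [Fin.natAddOrderEmb, Fin.append_right]
  rw [h]

lemma wedgeOn_union {n : ℕ} (v : Fin n → V) (A B : Finset (Fin n))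
    (h : ∀ x ∈ A, ∀ y ∈ B, x < y) :
    wedgeOn K v (A ∪ B) = wedgeOn K v A * wedgeOn K v B := by
  unfold wedgeOn
  rw [sortUnion _ _ h, List.map_append, List.prod_append]

lemma wedgeOn_compl_natAdd {s b : ℕ} (p : Fin s → V) (w : Fin b → V) (T : Finset (Fin b)) :
    wedgeOn K (Fin.append p w) (T.map (Fin.natAddOrderEmb s).toEmbedding)ᶜ =
      ExteriorAlgebra.ιMulti K s p * wedgeOn K w Tᶜ := by
  rw [complMap, wedgeOn_union _ _ _ ?hlt]
  case hlt =>
    intro x hx y hy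
    simp only [Finset.mem_map, RelEmbedding.coe_toEmbedding] at hx hy
    obtain ⟨j, -, rfl⟩ := hx
    obtain ⟨j', -, rfl⟩ := hy
    simp only [Fin.lt_def, Fin.castAddOrderEmb_apply, Fin.natAddOrderEmb_apply,
      Fin.coe_castAdd, Fin.coe_natAdd]
    have := j.isLt
    omega
  rw [wedgeOn_map, wedgeOn_natAdd]
  have hc : Fin.append p w ∘ (Fin.castAddOrderEmb b) = p := by
    funext j
    simp [Fin.castAddOrderEmb, Fin.append_left]
  rw [hc, wedgeOn_univ]

end WedgeLemmas

section Vanish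
variable {K V : Type*} [CommRing K] [AddCommGroup V] [Module K V]

lemma ι_mul_ιMulti_zero {c : ℕ} (x : Fin c → V) {v : V}
    (hv : v ∈ Submodule.span K (Set.range x)) :
    ExteriorAlgebra.ι K v * ExteriorAlgebra.ιMulti K c x = 0 := by
  induction hv using Submodule.span_induction with
  | mem v hv =>
    obtain ⟨j, rfl⟩ := hv
    rw [ExteriorAlgebra.ιMulti_apply]
    exact ExteriorAlgebra.ι_mul_prod_list x j
  | zero => simp
  | add v w _ _ hv hw => rw [map_add, add_mul, hv, hw, add_zero]
  | smul k v _ hv => rw [map_smul, smul_mul_assoc, hv, smul_zero]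

lemma ι_mul_listprod_zero (l : List V) {v : V} (E : ExteriorAlgebra K V)
    (h : ExteriorAlgebra.ι K v * E = 0) :
    ExteriorAlgebra.ι K v * ((l.map fun t => ExteriorAlgebra.ι K t).prod * E) = 0 := by
  induction l with
  | nil => simpa using h
  | cons q l ih =>
    rw [List.map_cons, List.prod_cons, mul_assoc, ← mul_assoc (ExteriorAlgebra.ι K v),
      show ExteriorAlgebra.ι K v * ExteriorAlgebra.ι K q =
        -(ExteriorAlgebra.ι K q * ExteriorAlgebra.ι K v) from
        eq_neg_of_add_eq_zero_left (ExteriorAlgebra.ι_add_mul_swap v q),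
      neg_mul, mul_assoc, ih, mul_zero, neg_zero]

lemma wedgeOn_mul_zero {n : ℕ} (v : Fin n → V) (T : Finset (Fin n)) {i : Fin n} (hi : i ∈ T)
    (E : ExteriorAlgebra K V) (h : ExteriorAlgebra.ι K (v i) * E = 0) :
    wedgeOn K v T * E = 0 := by
  obtain ⟨l₁, l₂, hl⟩ := List.append_of_mem ((Finset.mem_sort (· ≤ ·)).mpr hi)
  unfold wedgeOn
  rw [hl, List.map_append, List.map_cons, List.prod_append, List.prod_cons,
    mul_assoc, mul_assoc]
  have h0 := ι_mul_listprod_zero (l₂.map v) E h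
  simp only [List.map_map, Function.comp_def] at h0
  rw [h0, mul_zero]

end Vanish

lemma exists_map_of_ge {s b : ℕ} (T' : Finset (Fin (s + b))) (h : ∀ i ∈ T', s ≤ (i : ℕ)) :
    ∃ T : Finset (Fin b), T.map (Fin.natAddOrderEmb s).toEmbedding = T' := by
  classical
  refine ⟨Finset.univ.filter fun j : Fin b => Fin.natAdd s j ∈ T', ?_⟩
  ext i
  simp only [Finset.mem_map, Finset.mem_filter, Finset.mem_univ, true_and,
    RelEmbedding.coe_toEmbedding, Fin.natAddOrderEmb_apply]
  constructor
  · rintro ⟨j, hj, rfl⟩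
    exact hj
  · intro hi
    have hs := h i hi
    have hlt : (i : ℕ) - s < b := by
      have := i.isLt
      omega
    refine ⟨⟨(i : ℕ) - s, hlt⟩, ?_, ?_⟩
    · have : Fin.natAdd s ⟨(i : ℕ) - s, hlt⟩ = i := by
        apply Fin.ext
        simp only [Fin.coe_natAdd]
        omega
      rwa [this]
    · apply Fin.ext
      simp only [Fin.coe_natAdd]
      omega

/-- modular law for geometric products: for extensors `A, B, C` in `Λ(V)`
with `A` dividing `C` (`Ā ⊆ C̄`), and all `s, t ∈ ℕ`,
`⋄₃₂^{(t)} ⋄₂₁^{(s)} (A ⊗ B ⊗ C) = ⋄₂₁^{(s)} ⋄₃₂^{(t)} (A ⊗ B ⊗ C)`.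
The geometric products `⋄₂₁^{(s)}` and `⋄₃₂^{(t)}` on `Λ(V)^{⊗3}` are given as linear
operators characterized on decomposable arguments by the slice formulas. -/
theorem stmt18 {K V : Type*} [Field K] [AddCommGroup V] [Module K V] [FiniteDimensional K V]
    (s t : ℕ)
    (D21 D32 : ExteriorAlgebra K V ⊗[K] (ExteriorAlgebra K V ⊗[K] ExteriorAlgebra K V) →ₗ[K]
      ExteriorAlgebra K V ⊗[K] (ExteriorAlgebra K V ⊗[K] ExteriorAlgebra K V))
    (hD21 : ∀ (c : ℕ) (v : Fin c → V) (Y Z : ExteriorAlgebra K V),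
      D21 (ExteriorAlgebra.ιMulti K c v ⊗ₜ[K] (Y ⊗ₜ[K] Z)) =
        ∑ S ∈ Finset.powersetCard s Finset.univ,
          shuffleSign S • (wedgeOn K v Sᶜ ⊗ₜ[K] ((wedgeOn K v S * Y) ⊗ₜ[K] Z)))
    (hD32 : ∀ (X : ExteriorAlgebra K V) (c : ℕ) (v : Fin c → V) (Z : ExteriorAlgebra K V),
      D32 (X ⊗ₜ[K] (ExteriorAlgebra.ιMulti K c v ⊗ₜ[K] Z)) =
        ∑ S ∈ Finset.powersetCard t Finset.univ,
          shuffleSign S • (X ⊗ₜ[K] (wedgeOn K v Sᶜ ⊗ₜ[K] (wedgeOn K v S * Z))))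
    {a b c : ℕ} (u : Fin a → V) (w : Fin b → V) (x : Fin c → V)
    (hu : LinearIndependent K u) (hw : LinearIndependent K w) (hx : LinearIndependent K x)
    (hdiv : Submodule.span K (Set.range u) ≤ Submodule.span K (Set.range x)) :
    D32 (D21 (ExteriorAlgebra.ιMulti K a u ⊗ₜ[K]
        (ExteriorAlgebra.ιMulti K b w ⊗ₜ[K] ExteriorAlgebra.ιMulti K c x))) =
      D21 (D32 (ExteriorAlgebra.ιMulti K a u ⊗ₜ[K]
        (ExteriorAlgebra.ιMulti K b w ⊗ₜ[K] ExteriorAlgebra.ιMulti K c x))) := by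
  classical
  rw [hD21 a u (ExteriorAlgebra.ιMulti K b w) (ExteriorAlgebra.ιMulti K c x), map_sum,
    hD32 (ExteriorAlgebra.ιMulti K a u) b w (ExteriorAlgebra.ιMulti K c x), map_sum]
  have hR : ∀ T ∈ Finset.powersetCard t (Finset.univ : Finset (Fin b)),
      D21 (shuffleSign T • (ExteriorAlgebra.ιMulti K a u ⊗ₜ[K]
          (wedgeOn K w Tᶜ ⊗ₜ[K] (wedgeOn K w T * ExteriorAlgebra.ιMulti K c x)))) =
      shuffleSign T • ∑ S ∈ Finset.powersetCard s (Finset.univ : Finset (Fin a)),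
        shuffleSign S • (wedgeOn K u Sᶜ ⊗ₜ[K] ((wedgeOn K u S * wedgeOn K w Tᶜ) ⊗ₜ[K]
          (wedgeOn K w T * ExteriorAlgebra.ιMulti K c x))) := by
    intro T _
    rw [map_zsmul, hD21]
  have hL : ∀ S ∈ Finset.powersetCard s (Finset.univ : Finset (Fin a)),
      D32 (shuffleSign S • (wedgeOn K u Sᶜ ⊗ₜ[K]
          ((wedgeOn K u S * ExteriorAlgebra.ιMulti K b w) ⊗ₜ[K] ExteriorAlgebra.ιMulti K c x))) =
      shuffleSign S • ∑ T ∈ Finset.powersetCard t (Finset.univ : Finset (Fin b)),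
        shuffleSign T • (wedgeOn K u Sᶜ ⊗ₜ[K] ((wedgeOn K u S * wedgeOn K w Tᶜ) ⊗ₜ[K]
          (wedgeOn K w T * ExteriorAlgebra.ιMulti K c x))) := by
    intro S hS'
    have hS : S.card = s := (Finset.mem_powersetCard_univ).mp hS'
    rw [map_zsmul]
    congr 1
    set p : Fin s → V := u ∘ S.orderEmbOfFin hS with hp
    rw [wedgeOn_mul_ιMulti u S hS w, hD32]
    -- restrict the sum to subsets of the `w`-block
    set mapEmb : Finset (Fin b) ↪ Finset (Fin (s + b)) :=
      ⟨fun T => T.map (Fin.natAddOrderEmb s).toEmbedding,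
        Finset.map_injective (Fin.natAddOrderEmb s).toEmbedding⟩ with hmapEmb
    have hsub : (Finset.powersetCard t (Finset.univ : Finset (Fin b))).map mapEmb ⊆
        Finset.powersetCard t (Finset.univ : Finset (Fin (s + b))) := by
      intro T' hT'
      simp only [Finset.mem_map, hmapEmb, Function.Embedding.coeFn_mk] at hT'
      obtain ⟨T, hT, rfl⟩ := hT'
      rw [Finset.mem_powersetCard_univ, Finset.card_map]
      exact (Finset.mem_powersetCard_univ).mp hT
    have hzero : ∀ T' ∈ Finset.powersetCard t (Finset.univ : Finset (Fin (s + b))),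
        T' ∉ (Finset.powersetCard t (Finset.univ : Finset (Fin b))).map mapEmb →
        shuffleSign T' • (wedgeOn K u Sᶜ ⊗ₜ[K] (wedgeOn K (Fin.append p w) T'ᶜ ⊗ₜ[K]
          (wedgeOn K (Fin.append p w) T' * ExteriorAlgebra.ιMulti K c x))) = 0 := by
      intro T' hT' hnB
      -- T' must contain an index in the `p`-block
      have hex : ∃ j : Fin s, Fin.castAdd b j ∈ T' := by
        by_contra hc
        push_neg at hc
        have hge : ∀ i ∈ T', s ≤ (i : ℕ) := by
          intro i hi
          by_contra hilt'
          push_neg at hilt'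
          have hieq : i = Fin.castAdd b ⟨(i : ℕ), hilt'⟩ := Fin.ext rfl
          exact hc ⟨(i : ℕ), hilt'⟩ (hieq ▸ hi)
        obtain ⟨T, rfl⟩ := exists_map_of_ge T' hge
        refine hnB ?_
        rw [Finset.mem_map]
        refine ⟨T, ?_, rfl⟩
        rw [Finset.mem_powersetCard_univ]
        rw [Finset.mem_powersetCard_univ, Finset.card_map] at hT'
        exact hT'
      obtain ⟨j, hiT⟩ := hex
      have hmem : Fin.append p w (Fin.castAdd b j) ∈ Submodule.span K (Set.range x) := by
        rw [Fin.append_left, hp]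
        exact hdiv (Submodule.subset_span ⟨S.orderEmbOfFin hS j, rfl⟩)
      have hz : wedgeOn K (Fin.append p w) T' * ExteriorAlgebra.ιMulti K c x = 0 :=
        wedgeOn_mul_zero _ _ hiT _ (ι_mul_ιMulti_zero x hmem)
      rw [hz, TensorProduct.tmul_zero, TensorProduct.tmul_zero, smul_zero]
    rw [← Finset.sum_subset hsub hzero, Finset.sum_map]
    refine Finset.sum_congr rfl fun T _ => ?_
    simp only [hmapEmb, Function.Embedding.coeFn_mk]
    rw [shuffleSign_map, wedgeOn_natAdd, wedgeOn_compl_natAdd, hp,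
      ← wedgeOn_eq_ιMulti u S hS]
  rw [Finset.sum_congr rfl hL, Finset.sum_congr rfl hR]
  simp_rw [Finset.smul_sum]
  rw [Finset.sum_comm]
  exact Finset.sum_congr rfl fun T _ => Finset.sum_congr rfl fun S _ => smul_comm _ _ _
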